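/- Let Δ be a simplicial complex and let 𝒞 be an ordered proper vertex k-colouring of Δ. With the variable order x_1,…,x_k,y_1,…,y_k on R = K[x_1,…,x_k,y_1,…,y_k], the uniform face ideal I(Δ, 𝒞) is weakly polymatroidal if and only if 𝒞 is a nested colouring endowed with the nesting order. -/

import Mathlib

open MvPolynomial

/-- A simplicial complex on a vertex type `V`: a collection of finite subsets (faces)
containing the empty set and closed under taking subsets. -/
structure SimpComplex (V : Type) where
  faces : Set (Finset V)
  empty_mem : ∅ ∈ faces
  down_closed : ∀ {σ τ : Finset V}, σ ∈ faces → τ ⊆ σ → τ ∈ faces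

namespace SimpComplex

variable {V : Type}

/-- `A` is an independent set of `Δ`: no two distinct members lie in a common face. -/
def IsIndep (Δ : SimpComplex V) (A : Set V) : Prop :=
  ∀ u ∈ A, ∀ v ∈ A, u ≠ v → ∀ σ ∈ Δ.faces, ¬(u ∈ σ ∧ v ∈ σ)

/-- The link of a vertex `v` in `Δ`. -/
def link [DecidableEq V] (Δ : SimpComplex V) (v : V) : Set (Finset V) :=
  {τ | τ ∈ Δ.faces ∧ v ∉ τ ∧ insert v τ ∈ Δ.faces}

end SimpComplex

/-- A family of finsets indexed by `Fin k` is a partition of the vertex set. -/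
def IsPartition {V : Type} {k : ℕ} (C : Fin k → Finset V) : Prop :=
  ∀ v : V, ∃! i, v ∈ C i

/-- A proper vertex `k`-colouring of a simplicial complex: a partition into independent sets. -/
def IsProperColouring {V : Type} {k : ℕ} (Δ : SimpComplex V) (C : Fin k → Finset V) : Prop :=
  IsPartition C ∧ ∀ i, Δ.IsIndep (C i : Set V)

/-- An ordered proper vertex `k`-colouring, given by a duplicate-free list (recording the
linear order) for each colour class; the classes partition the vertices and are independent. -/
def IsOrderedColouring {V : Type} {k : ℕ} (Δ : SimpComplex V) (C : Fin k → List V) : Prop :=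
  (∀ i, (C i).Nodup) ∧ (∀ v : V, ∃! i, v ∈ C i) ∧ (∀ i, Δ.IsIndep {v | v ∈ C i})

/-- The given linear orders on the colour classes are nesting orders: within a class,
if `v` comes before `u` then `link(u) ⊆ link(v)`.  (Thus the colouring is nested and is
endowed with the nesting order.) -/
def IsNestingOrdered {V : Type} [DecidableEq V] {k : ℕ} (Δ : SimpComplex V)
    (C : Fin k → List V) : Prop :=
  ∀ i, (C i).Pairwise (fun v u => Δ.link u ⊆ Δ.link v)

/-- The index vector of a set `σ` with respect to the ordered colouring `C`:
`eVec C σ i = j` iff the (unique) element of `σ ∩ C i` is the `j`-th element of the list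
`C i` (counting from 1), and `0` if `σ ∩ C i = ∅`. -/
def eVec {V : Type} [DecidableEq V] {k : ℕ} (C : Fin k → List V) (σ : Finset V)
    (i : Fin k) : ℕ :=
  if (C i).any (fun v => decide (v ∈ σ)) then
    (C i).findIdx (fun v => decide (v ∈ σ)) + 1
  else 0

/-- The uniform monomial of a face `σ`:  `∏ i, x_i ^ (#C_i - e_i(σ)) * y_i ^ (e_i(σ))`,
where `x_i = X (Sum.inl i)` and `y_i = X (Sum.inr i)`. -/
noncomputable def uniformMonomial (K : Type) [Field K] {V : Type} [DecidableEq V] {k : ℕ}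
    (C : Fin k → List V) (σ : Finset V) : MvPolynomial (Fin k ⊕ Fin k) K :=
  ∏ i : Fin k, (X (Sum.inl i) ^ ((C i).length - eVec C σ i) * X (Sum.inr i) ^ eVec C σ i)

/-- The uniform face ideal of `Δ` with respect to the ordered colouring `C`. -/
noncomputable def uniformFaceIdeal (K : Type) [Field K] {V : Type} [DecidableEq V] {k : ℕ}
    (Δ : SimpComplex V) (C : Fin k → List V) : Ideal (MvPolynomial (Fin k ⊕ Fin k) K) :=
  Ideal.span {m | ∃ σ ∈ Δ.faces, m = uniformMonomial K C σ}

/-- The position of a variable in the order `x_1 < ⋯ < x_k < y_1 < ⋯ < y_k`. -/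
def varIdx {k : ℕ} : Fin k ⊕ Fin k → ℕ :=
  Sum.elim (fun i => (i : ℕ)) (fun i => k + (i : ℕ))

/-- A monomial ideal is stable if for every monomial `m ∈ I` with maximum variable `w = μ(m)`
and every variable `z < w`, the monomial `z·m/w` lies in `I`. -/
def IsStable {k : ℕ} {K : Type} [Field K] (I : Ideal (MvPolynomial (Fin k ⊕ Fin k) K)) :
    Prop :=
  ∀ a : (Fin k ⊕ Fin k) →₀ ℕ, MvPolynomial.monomial a (1 : K) ∈ I →
    ∀ w : Fin k ⊕ Fin k, a w ≠ 0 → (∀ w', a w' ≠ 0 → varIdx w' ≤ varIdx w) →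
    ∀ z : Fin k ⊕ Fin k, varIdx z < varIdx w →
      MvPolynomial.monomial (a - Finsupp.single w 1 + Finsupp.single z 1) (1 : K) ∈ I

/-- A monomial ideal is strongly stable if for every monomial `m ∈ I`, every variable `w`
dividing `m` and every variable `z < w`, the monomial `z·m/w` lies in `I`. -/
def IsStronglyStable {k : ℕ} {K : Type} [Field K]
    (I : Ideal (MvPolynomial (Fin k ⊕ Fin k) K)) : Prop :=
  ∀ a : (Fin k ⊕ Fin k) →₀ ℕ, MvPolynomial.monomial a (1 : K) ∈ I →
    ∀ w : Fin k ⊕ Fin k, a w ≠ 0 →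
    ∀ z : Fin k ⊕ Fin k, varIdx z < varIdx w →
      MvPolynomial.monomial (a - Finsupp.single w 1 + Finsupp.single z 1) (1 : K) ∈ I

/-- A monomial ideal of `K[x_1,…,x_k,y_1,…,y_k]` is `Q_k`-Borel, where `Q_k` is the poset on
the variables whose only relations are `x_i < y_i`:  for every monomial `m ∈ I` with
`y_i ∣ m`, the monomial `x_i·m/y_i` lies in `I`. -/
def IsQkBorel {k : ℕ} {K : Type} [Field K]
    (I : Ideal (MvPolynomial (Fin k ⊕ Fin k) K)) : Prop :=
  ∀ a : (Fin k ⊕ Fin k) →₀ ℕ, MvPolynomial.monomial a (1 : K) ∈ I →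
    ∀ i : Fin k, a (Sum.inr i) ≠ 0 →
      MvPolynomial.monomial
        (a - Finsupp.single (Sum.inr i) 1 + Finsupp.single (Sum.inl i) 1) (1 : K) ∈ I

/-- `a` is the exponent vector of a minimal (monomial) generator of the monomial ideal `I`:
the monomial `x^a` lies in `I` and no proper monomial divisor of it does. -/
def IsMinGen {σ : Type} {K : Type} [Field K] (I : Ideal (MvPolynomial σ K))
    (a : σ →₀ ℕ) : Prop :=
  MvPolynomial.monomial a (1 : K) ∈ I ∧
    ∀ b : σ →₀ ℕ, b ≤ a → b ≠ a → MvPolynomial.monomial b (1 : K) ∉ I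

/-- A monomial ideal is polymatroidal:  all minimal generators have the same degree, and for
every pair of minimal generators `m = ∏ z^{a}`, `m' = ∏ z^{b}` and every variable `t` with
`a t > b t` there is a variable `s` with `b s > a s` such that `z_s·m/z_t` is again a minimal
generator. -/
def IsPolymatroidal {σ : Type} {K : Type} [Field K]
    (I : Ideal (MvPolynomial σ K)) : Prop :=
  (∃ d : ℕ, ∀ a, IsMinGen I a → (a.sum fun _ e => e) = d) ∧
  ∀ a b, IsMinGen I a → IsMinGen I b → ∀ t, b t < a t →
    ∃ s, a s < b s ∧ IsMinGen I (a - Finsupp.single t 1 + Finsupp.single s 1)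

/-- A monomial ideal is squarefree: all of its minimal generators are squarefree. -/
def IsSquarefreeMonomialIdeal {σ : Type} {K : Type} [Field K]
    (I : Ideal (MvPolynomial σ K)) : Prop :=
  ∀ a, IsMinGen I a → ∀ v, a v ≤ 1

/-- `a` is a `Q_k`-Borel generator of `I`: a minimal generator which is not obtained from any
other minimal generator by a `Q_k`-Borel move (replacing `y_i` by `x_i`). -/
def IsQkBorelGen {k : ℕ} {K : Type} [Field K]
    (I : Ideal (MvPolynomial (Fin k ⊕ Fin k) K)) (a : (Fin k ⊕ Fin k) →₀ ℕ) : Prop :=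
  IsMinGen I a ∧
    ¬ ∃ b : (Fin k ⊕ Fin k) →₀ ℕ, IsMinGen I b ∧ ∃ i : Fin k, b (Sum.inr i) ≠ 0 ∧
      a = b - Finsupp.single (Sum.inr i) 1 + Finsupp.single (Sum.inl i) 1

/-- `I` is a principal `Q_k`-Borel ideal: it is `Q_k`-Borel and has a unique `Q_k`-Borel
generator. -/
def IsPrincipalQkBorel {k : ℕ} {K : Type} [Field K]
    (I : Ideal (MvPolynomial (Fin k ⊕ Fin k) K)) : Prop :=
  IsQkBorel I ∧ ∃! a, IsQkBorelGen I a

/-- A monomial ideal of `K[x_1,…,x_k,y_1,…,y_k]` is weakly polymatroidal with respect to the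
variable order `x_1,…,x_k,y_1,…,y_k`: for every pair of minimal generators `m = ∏ z^a` and
`m' = ∏ z^b` which agree on all variables before `t` and satisfy `a t > b t`, there is a later
variable `s > t` dividing `m'` such that `z_t·m'/z_s ∈ I`. -/
def IsWeaklyPolymatroidal {k : ℕ} {K : Type} [Field K]
    (I : Ideal (MvPolynomial (Fin k ⊕ Fin k) K)) : Prop :=
  ∀ a b, IsMinGen I a → IsMinGen I b →
    ∀ t : Fin k ⊕ Fin k, (∀ t', varIdx t' < varIdx t → a t' = b t') → b t < a t →
      ∃ s : Fin k ⊕ Fin k, varIdx t < varIdx s ∧ b s ≠ 0 ∧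
        MvPolynomial.monomial (b - Finsupp.single s 1 + Finsupp.single t 1) (1 : K) ∈ I

section Stmt10Aux

open Finsupp

variable {n k : ℕ}

private lemma list_findIdx_congr {α : Type} {p q : α → Bool}
    (l : List α) (h : ∀ x ∈ l, p x = q x) : l.findIdx p = l.findIdx q := by
  induction l with
  | nil => rfl
  | cons b l ih =>
    rw [List.findIdx_cons, List.findIdx_cons, h b (by simp),
      ih (fun x hx => h x (by simp [hx]))]

private lemma list_any_congr {α : Type} {p q : α → Bool}
    (l : List α) (h : ∀ x ∈ l, p x = q x) : l.any p = l.any q := by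
  induction l with
  | nil => rfl
  | cons b l ih =>
    simp only [List.any_cons, h b (by simp), ih (fun x hx => h x (by simp [hx]))]

lemma eVec_le (C : Fin k → List (Fin n)) (σ : Finset (Fin n)) (i : Fin k) :
    eVec C σ i ≤ (C i).length := by
  unfold eVec
  split
  · next h =>
    have := List.findIdx_lt_length_of_exists (p := fun v => decide (v ∈ σ))
      (by simpa using h)
    omega
  · exact Nat.zero_le _

lemma eVec_eq_zero_iff (C : Fin k → List (Fin n)) (σ : Finset (Fin n)) (i : Fin k) :
    eVec C σ i = 0 ↔ ∀ v ∈ C i, v ∉ σ := by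
  constructor
  · intro h v hv hvσ
    have hany : (C i).any (fun v => decide (v ∈ σ)) = true := by
      simp only [List.any_eq_true, decide_eq_true_eq]
      exact ⟨v, hv, hvσ⟩
    rw [eVec, if_pos hany] at h
    omega
  · intro h
    have hany : ¬ ((C i).any (fun v => decide (v ∈ σ)) = true) := by
      simp only [List.any_eq_true, decide_eq_true_eq, not_exists]
      intro v hv
      exact h v hv.1 hv.2
    rw [eVec, if_neg hany]

variable {Δ : SimpComplex (Fin n)} {C : Fin k → List (Fin n)}

lemma indep_eq (hC : IsOrderedColouring Δ C) {σ : Finset (Fin n)} (hσ : σ ∈ Δ.faces)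
    {i : Fin k} {u v : Fin n} (hu : u ∈ C i) (hv : v ∈ C i) (huσ : u ∈ σ) (hvσ : v ∈ σ) :
    u = v := by
  by_contra hne
  exact hC.2.2 i u hu v hv hne σ hσ ⟨huσ, hvσ⟩

lemma class_eq (hC : IsOrderedColouring Δ C) {i j : Fin k} {v : Fin n}
    (hvi : v ∈ C i) (hvj : v ∈ C j) : i = j := by
  obtain ⟨w, _, huniq⟩ := hC.2.1 v
  rw [huniq i hvi, huniq j hvj]

lemma eVec_eq_succ_iff (hC : IsOrderedColouring Δ C) {σ : Finset (Fin n)}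
    (hσ : σ ∈ Δ.faces) (i : Fin k) (m : ℕ) :
    eVec C σ i = m + 1 ↔ ∃ hm : m < (C i).length, (C i).get ⟨m, hm⟩ ∈ σ := by
  constructor
  · intro h
    have hany : (C i).any (fun v => decide (v ∈ σ)) = true := by
      by_contra hc
      rw [eVec, if_neg hc] at h
      omega
    rw [eVec, if_pos hany] at h
    have hfi : (C i).findIdx (fun v => decide (v ∈ σ)) = m := by omega
    have hlt : (C i).findIdx (fun v => decide (v ∈ σ)) < (C i).length :=
      List.findIdx_lt_length_of_exists (by simpa using hany)
    subst hfi
    exact ⟨hlt, by simpa using List.findIdx_getElem (w := hlt)⟩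
  · rintro ⟨hm, hv⟩
    have hvC : (C i).get ⟨m, hm⟩ ∈ C i := List.get_mem _ _
    have hany : (C i).any (fun v => decide (v ∈ σ)) = true := by
      simp only [List.any_eq_true, decide_eq_true_eq]
      exact ⟨_, hvC, hv⟩
    have hlt : (C i).findIdx (fun v => decide (v ∈ σ)) < (C i).length :=
      List.findIdx_lt_length_of_exists (by simpa using hany)
    have hw : (C i).get ⟨_, hlt⟩ ∈ σ := by
      simpa using List.findIdx_getElem (w := hlt)
    have heq : (C i).get ⟨_, hlt⟩ = (C i).get ⟨m, hm⟩ :=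
      indep_eq hC hσ (List.get_mem _ _) hvC hw hv
    have hidx : (C i).findIdx (fun v => decide (v ∈ σ)) = m := by
      have := (hC.1 i).get_inj_iff.mp heq
      exact congrArg Fin.val this
    rw [eVec, if_pos hany, hidx]

lemma eVec_congr {σ τ : Finset (Fin n)} (C : Fin k → List (Fin n)) (i : Fin k)
    (h : ∀ v ∈ C i, (v ∈ σ ↔ v ∈ τ)) : eVec C σ i = eVec C τ i := by
  have hpq : ∀ x ∈ C i,
      (fun v => decide (v ∈ σ)) x = (fun v => decide (v ∈ τ)) x := by
    intro x hx
    simpa using h x hx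
  rw [eVec, eVec, list_any_congr _ hpq, list_findIdx_congr _ hpq]

lemma mem_face_iff (hC : IsOrderedColouring Δ C) {σ : Finset (Fin n)}
    (hσ : σ ∈ Δ.faces) {i : Fin k} {x : Fin n}
    (hx : x ∈ C i) {m : ℕ} (hm : m < (C i).length) (hget : (C i).get ⟨m, hm⟩ = x) :
    x ∈ σ ↔ eVec C σ i = m + 1 := by
  rw [eVec_eq_succ_iff hC hσ]
  constructor
  · intro h
    exact ⟨hm, hget ▸ h⟩
  · rintro ⟨hm', h⟩
    rwa [show ((⟨m, hm'⟩ : Fin (C i).length)) = ⟨m, hm⟩ from rfl, hget] at h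

/-- The exponent vector of the uniform monomial of `σ`. -/
noncomputable def aVec (C : Fin k → List (Fin n)) (σ : Finset (Fin n)) :
    (Fin k ⊕ Fin k) →₀ ℕ :=
  Finsupp.equivFunOnFinite.symm
    (Sum.elim (fun i => (C i).length - eVec C σ i) (fun i => eVec C σ i))

@[simp] lemma aVec_inl (C : Fin k → List (Fin n)) (σ : Finset (Fin n)) (i : Fin k) :
    aVec C σ (Sum.inl i) = (C i).length - eVec C σ i := rfl

@[simp] lemma aVec_inr (C : Fin k → List (Fin n)) (σ : Finset (Fin n)) (i : Fin k) :
    aVec C σ (Sum.inr i) = eVec C σ i := rfl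

private lemma prod_monomial_one {ι : Type} (K : Type) [Field K] (s : Finset ι)
    (f : ι → ((Fin k ⊕ Fin k) →₀ ℕ)) :
    (∏ i ∈ s, (MvPolynomial.monomial (f i) (1 : K))) =
      MvPolynomial.monomial (∑ i ∈ s, f i) 1 := by
  induction s using Finset.cons_induction with
  | empty => simp
  | cons a s ha ih =>
    rw [Finset.prod_cons, Finset.sum_cons, ih, MvPolynomial.monomial_mul, one_mul]

lemma uniformMonomial_eq (K : Type) [Field K] (C : Fin k → List (Fin n))
    (σ : Finset (Fin n)) :
    uniformMonomial K C σ = MvPolynomial.monomial (aVec C σ) (1 : K) := by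
  unfold uniformMonomial
  have h1 : ∀ i : Fin k,
      (X (Sum.inl i) ^ ((C i).length - eVec C σ i) * X (Sum.inr i) ^ eVec C σ i
        : MvPolynomial (Fin k ⊕ Fin k) K)
      = MvPolynomial.monomial (Finsupp.single (Sum.inl i) ((C i).length - eVec C σ i)
          + Finsupp.single (Sum.inr i) (eVec C σ i)) 1 := by
    intro i
    rw [MvPolynomial.X_pow_eq_monomial, MvPolynomial.X_pow_eq_monomial,
      MvPolynomial.monomial_mul, one_mul]
  rw [Finset.prod_congr rfl (fun i _ => h1 i), prod_monomial_one]
  have hsum : (∑ i : Fin k, (Finsupp.single (Sum.inl i) ((C i).length - eVec C σ i)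
      + Finsupp.single (Sum.inr i) (eVec C σ i))) = aVec C σ := by
    ext x
    rw [Finsupp.finset_sum_apply]
    cases x with
    | inl j =>
      have hterm : ∀ x : Fin k, (Finsupp.single (Sum.inl x : Fin k ⊕ Fin k) ((C x).length - eVec C σ x)
          + Finsupp.single (Sum.inr x : Fin k ⊕ Fin k) (eVec C σ x)) (Sum.inl j)
          = if x = j then (C j).length - eVec C σ j else 0 := by
        intro x
        rcases eq_or_ne x j with rfl | hxj
        · simp
        · simp [Finsupp.single_apply, hxj]
      rw [Finset.sum_congr rfl fun x _ => hterm x, Finset.sum_ite_eq' Finset.univ j]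
      simp
    | inr j =>
      have hterm : ∀ x : Fin k, (Finsupp.single (Sum.inl x : Fin k ⊕ Fin k) ((C x).length - eVec C σ x)
          + Finsupp.single (Sum.inr x : Fin k ⊕ Fin k) (eVec C σ x)) (Sum.inr j)
          = if x = j then eVec C σ j else 0 := by
        intro x
        rcases eq_or_ne x j with rfl | hxj
        · simp
        · simp [Finsupp.single_apply, hxj]
      rw [Finset.sum_congr rfl fun x _ => hterm x, Finset.sum_ite_eq' Finset.univ j]
      simp
  rw [hsum]

lemma uniformFaceIdeal_eq (K : Type) [Field K] (Δ : SimpComplex (Fin n))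
    (C : Fin k → List (Fin n)) :
    uniformFaceIdeal K Δ C =
      Ideal.span ((fun s => MvPolynomial.monomial s (1 : K)) '' (aVec C '' Δ.faces)) := by
  unfold uniformFaceIdeal
  congr 1
  ext m
  simp only [Set.mem_setOf_eq, Set.mem_image]
  constructor
  · rintro ⟨σ, hσ, rfl⟩
    exact ⟨aVec C σ, ⟨σ, hσ, rfl⟩, (uniformMonomial_eq K C σ).symm⟩
  · rintro ⟨a, ⟨σ, hσ, rfl⟩, rfl⟩
    exact ⟨σ, hσ, (uniformMonomial_eq K C σ).symm⟩

lemma monomial_mem_iff (K : Type) [Field K] (Δ : SimpComplex (Fin n))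
    (C : Fin k → List (Fin n)) (a : (Fin k ⊕ Fin k) →₀ ℕ) :
    MvPolynomial.monomial a (1 : K) ∈ uniformFaceIdeal K Δ C ↔
      ∃ σ ∈ Δ.faces, aVec C σ ≤ a := by
  rw [uniformFaceIdeal_eq, MvPolynomial.mem_ideal_span_monomial_image]
  classical
  rw [MvPolynomial.support_monomial, if_neg one_ne_zero]
  simp only [Finset.mem_singleton, Set.mem_image, forall_eq]
  constructor
  · rintro ⟨si, ⟨σ, hσ, rfl⟩, h⟩
    exact ⟨σ, hσ, h⟩
  · rintro ⟨σ, hσ, h⟩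
    exact ⟨aVec C σ, ⟨σ, hσ, rfl⟩, h⟩

lemma sum_aVec (C : Fin k → List (Fin n)) (σ : Finset (Fin n)) :
    ∑ x : Fin k ⊕ Fin k, aVec C σ x = ∑ i : Fin k, (C i).length := by
  rw [Fintype.sum_sum_type]
  simp only [aVec_inl, aVec_inr]
  rw [← Finset.sum_add_distrib]
  refine Finset.sum_congr rfl fun i _ => ?_
  have := eVec_le C σ i
  omega

private lemma finsupp_eq_of_le_of_sum_le {α : Type} [Fintype α] {f g : α →₀ ℕ}
    (h : f ≤ g) (hs : ∑ x, g x ≤ ∑ x, f x) : f = g := by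
  have hpt := Finsupp.le_def.mp h
  ext a
  by_contra hne
  have hlt : f a < g a := lt_of_le_of_ne (hpt a) hne
  have : ∑ x, f x < ∑ x, g x :=
    Finset.sum_lt_sum (fun x _ => hpt x) ⟨a, Finset.mem_univ a, hlt⟩
  omega

lemma isMinGen_iff (K : Type) [Field K] (Δ : SimpComplex (Fin n))
    (C : Fin k → List (Fin n)) (a : (Fin k ⊕ Fin k) →₀ ℕ) :
    IsMinGen (uniformFaceIdeal K Δ C) a ↔ ∃ σ ∈ Δ.faces, a = aVec C σ := by
  constructor
  · rintro ⟨hmem, hmin⟩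
    obtain ⟨σ, hσ, hle⟩ := (monomial_mem_iff K Δ C a).mp hmem
    refine ⟨σ, hσ, ?_⟩
    by_contra hne
    exact hmin (aVec C σ) hle (fun h => hne h.symm)
      ((monomial_mem_iff K Δ C _).mpr ⟨σ, hσ, le_refl _⟩)
  · rintro ⟨σ, hσ, rfl⟩
    refine ⟨(monomial_mem_iff K Δ C _).mpr ⟨σ, hσ, le_refl _⟩, ?_⟩
    intro b hble hbne hbmem
    obtain ⟨τ, hτ, hle⟩ := (monomial_mem_iff K Δ C b).mp hbmem
    have h1 : ∑ x, b x ≤ ∑ x, aVec C σ x :=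
      Finset.sum_le_sum (fun x _ => Finsupp.le_def.mp hble x)
    have h2 : aVec C τ = b := by
      refine finsupp_eq_of_le_of_sum_le hle ?_
      rw [sum_aVec]
      rw [sum_aVec] at h1
      exact h1
    have h3 : b = aVec C σ := by
      refine finsupp_eq_of_le_of_sum_le hble ?_
      rw [← h2, sum_aVec, sum_aVec]
    exact hbne h3

lemma pair_sum (C : Fin k → List (Fin n)) (σ : Finset (Fin n)) (i : Fin k) :
    aVec C σ (Sum.inl i) + aVec C σ (Sum.inr i) = (C i).length := by
  simp only [aVec_inl, aVec_inr]
  have := eVec_le C σ i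
  omega

lemma aVec_move {σ ρ : Finset (Fin n)} {i : Fin k} {m : ℕ}
    (hσe : eVec C σ i = m + 1) (hρe : eVec C ρ i = m)
    (hj : ∀ j, j ≠ i → eVec C ρ j = eVec C σ j) :
    aVec C ρ = aVec C σ - Finsupp.single (Sum.inr i) 1 + Finsupp.single (Sum.inl i) 1 := by
  have hle := eVec_le C σ i
  ext x
  rw [Finsupp.add_apply, Finsupp.tsub_apply]
  cases x with
  | inl j =>
    rcases eq_or_ne j i with rfl | hji
    · rw [Finsupp.single_eq_of_ne' (by simp), Finsupp.single_eq_same, aVec_inl, aVec_inl,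
        hσe, hρe]
      omega
    · rw [Finsupp.single_eq_of_ne' (by simp), Finsupp.single_eq_of_ne' (by simp [Ne.symm hji]),
        aVec_inl, aVec_inl, hj j hji]
      omega
  | inr j =>
    rcases eq_or_ne j i with rfl | hji
    · rw [Finsupp.single_eq_same, Finsupp.single_eq_of_ne' (by simp), aVec_inr, aVec_inr,
        hσe, hρe]
      omega
    · rw [Finsupp.single_eq_of_ne' (by simp [Ne.symm hji]), Finsupp.single_eq_of_ne' (by simp),
        aVec_inr, aVec_inr, hj j hji]
      omega

lemma exists_face_move (hC : IsOrderedColouring Δ C) (hnest : IsNestingOrdered Δ C)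
    {τ : Finset (Fin n)} (hτ : τ ∈ Δ.faces) (i : Fin k) (m : ℕ)
    (he : eVec C τ i = m + 1) :
    ∃ ρ ∈ Δ.faces, eVec C ρ i = m ∧ ∀ j, j ≠ i → eVec C ρ j = eVec C τ j := by
  obtain ⟨hm, hu⟩ := (eVec_eq_succ_iff hC hτ i m).mp he
  have huC : (C i).get ⟨m, hm⟩ ∈ C i := List.get_mem _ _
  cases m with
  | zero =>
    refine ⟨τ.erase ((C i).get ⟨0, hm⟩), Δ.down_closed hτ (Finset.erase_subset _ _), ?_, ?_⟩
    · rw [eVec_eq_zero_iff]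
      intro v hv hvmem
      have hvτ : v ∈ τ := Finset.mem_of_mem_erase hvmem
      exact (Finset.ne_of_mem_erase hvmem) (indep_eq hC hτ hv huC hvτ hu)
    · intro j hji
      refine eVec_congr C j fun v hv => ?_
      have hvu : v ≠ (C i).get ⟨0, hm⟩ := fun h => hji (class_eq hC (h ▸ hv) huC)
      simp only [Finset.mem_erase]
      exact ⟨fun h => h.2, fun h => ⟨hvu, h⟩⟩
  | succ m' =>
    have hm' : m' < (C i).length := by omega
    have hwC : (C i).get ⟨m', hm'⟩ ∈ C i := List.get_mem _ _
    have hlink : Δ.link ((C i).get ⟨m' + 1, hm⟩) ⊆ Δ.link ((C i).get ⟨m', hm'⟩) := by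
      have hp := hnest i
      rw [List.pairwise_iff_getElem] at hp
      exact hp m' (m' + 1) hm' hm (Nat.lt_succ_self m')
    have herase : τ.erase ((C i).get ⟨m' + 1, hm⟩) ∈ Δ.link ((C i).get ⟨m' + 1, hm⟩) := by
      refine ⟨Δ.down_closed hτ (Finset.erase_subset _ _), Finset.notMem_erase _ _, ?_⟩
      rw [Finset.insert_erase hu]
      exact hτ
    obtain ⟨hρf1, hwne, hρf⟩ := hlink herase
    refine ⟨insert ((C i).get ⟨m', hm'⟩) (τ.erase ((C i).get ⟨m' + 1, hm⟩)), hρf, ?_, ?_⟩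
    · rw [eVec_eq_succ_iff hC hρf i m']
      exact ⟨hm', Finset.mem_insert_self _ _⟩
    · intro j hji
      refine eVec_congr C j fun v hv => ?_
      have hvu : v ≠ (C i).get ⟨m' + 1, hm⟩ := fun h => hji (class_eq hC (h ▸ hv) huC)
      have hvw : v ≠ (C i).get ⟨m', hm'⟩ := fun h => hji (class_eq hC (h ▸ hv) hwC)
      simp only [Finset.mem_insert, Finset.mem_erase]
      constructor
      · rintro (rfl | ⟨-, h⟩)
        · exact absurd rfl hvw
        · exact h
      · exact fun h => Or.inr ⟨hvu, h⟩

private lemma sum_single_one (a : Fin k ⊕ Fin k) :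
    ∑ x : Fin k ⊕ Fin k, Finsupp.single a (1 : ℕ) x = 1 := by
  classical
  simp [Finsupp.single_apply]

lemma wp_step {K : Type} [Field K] (hC : IsOrderedColouring Δ C)
    (hWP : IsWeaklyPolymatroidal (uniformFaceIdeal K Δ C))
    {τ : Finset (Fin n)} (hτ : τ ∈ Δ.faces) {i : Fin k}
    (hτi : eVec C τ i = 0) {q : ℕ} (hq : q + 1 < (C i).length)
    (hface : insert ((C i).get ⟨q + 1, hq⟩) τ ∈ Δ.faces) :
    insert ((C i).get ⟨q, by omega⟩) τ ∈ Δ.faces := by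
  have hq' : q < (C i).length := by omega
  set u := (C i).get ⟨q + 1, hq⟩ with hudef
  set w := (C i).get ⟨q, hq'⟩ with hwdef
  have huC : u ∈ C i := List.get_mem _ _
  have hwC : w ∈ C i := List.get_mem _ _
  have hτi' : ∀ v ∈ C i, v ∉ τ := (eVec_eq_zero_iff C τ i).mp hτi
  set σ' := insert u τ with hσ'def
  have hσ'i : eVec C σ' i = (q + 1) + 1 :=
    (eVec_eq_succ_iff hC hface i (q + 1)).mpr ⟨hq, Finset.mem_insert_self _ _⟩
  have hej : ∀ j, j ≠ i → eVec C σ' j = eVec C τ j := by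
    intro j hji
    refine eVec_congr C j fun v hv => ?_
    have hvu : v ≠ u := fun h => hji (class_eq hC (h ▸ hv) huC)
    simp [hσ'def, Finset.mem_insert, hvu]
  have hτle := eVec_le C τ
  have hσ'le := eVec_le C σ'
  -- apply weak polymatroidality
  obtain ⟨s, hs_gt, hs_ne, hmem⟩ := hWP (aVec C τ) (aVec C σ')
    ((isMinGen_iff K Δ C _).mpr ⟨τ, hτ, rfl⟩)
    ((isMinGen_iff K Δ C _).mpr ⟨σ', hface, rfl⟩)
    (Sum.inl i)
    (by
      intro t' hlt
      cases t' with
      | inl j =>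
        have hji : j ≠ i := by
          intro h
          subst h
          simp [varIdx] at hlt
        simp only [aVec_inl, hej j hji]
      | inr j =>
        exfalso
        have h1 : (i : ℕ) < k := i.isLt
        simp only [varIdx, Sum.elim_inl, Sum.elim_inr] at hlt
        omega)
    (by
      simp only [aVec_inl, hσ'i, hτi]
      omega)
  set c := aVec C σ' - Finsupp.single s 1 + Finsupp.single (Sum.inl i) 1 with hcdef
  obtain ⟨ρ, hρ, hle⟩ := (monomial_mem_iff K Δ C c).mp hmem
  have hcapp : ∀ x, c x = aVec C σ' x - Finsupp.single s 1 x
      + Finsupp.single (Sum.inl i) 1 x := by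
    intro x
    rw [hcdef, Finsupp.add_apply, Finsupp.tsub_apply]
  have hsne : aVec C σ' s ≠ 0 := hs_ne
  have hsumc : ∑ x, c x = ∑ i', (C i').length := by
    have hptc : ∀ x, c x + Finsupp.single s 1 x
        = aVec C σ' x + Finsupp.single (Sum.inl i) 1 x := by
      intro x
      have hS : Finsupp.single s (1 : ℕ) x ≤ aVec C σ' x := by
        rcases eq_or_ne s x with rfl | hxs
        · rw [Finsupp.single_eq_same]
          omega
        · rw [Finsupp.single_eq_of_ne' hxs]
          omega
      rw [hcapp x]
      omega
    have h1 : ∑ x, (c x + Finsupp.single s 1 x)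
        = ∑ x, (aVec C σ' x + Finsupp.single (Sum.inl i) 1 x) :=
      Finset.sum_congr rfl fun x _ => hptc x
    rw [Finset.sum_add_distrib, Finset.sum_add_distrib, sum_aVec,
      sum_single_one, sum_single_one] at h1
    omega
  have hρeq : aVec C ρ = c := by
    refine finsupp_eq_of_le_of_sum_le hle ?_
    rw [hsumc, sum_aVec]
  have hpairρ : c (Sum.inl i) + c (Sum.inr i) = (C i).length := by
    rw [← hρeq]
    exact pair_sum C ρ i
  have hpairσ' := pair_sum C σ' i
  -- show s = Sum.inr i
  have hs : s = Sum.inr i := by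
    by_contra hne
    have hsl : s ≠ Sum.inl i := by
      rintro rfl
      exact lt_irrefl _ hs_gt
    have h1 : c (Sum.inl i) = aVec C σ' (Sum.inl i) + 1 := by
      rw [hcapp, Finsupp.single_eq_of_ne' hsl, Finsupp.single_eq_same]
      omega
    have h2 : c (Sum.inr i) = aVec C σ' (Sum.inr i) := by
      rw [hcapp, Finsupp.single_eq_of_ne' hne, Finsupp.single_eq_of_ne' (by simp)]
      omega
    rw [h1, h2] at hpairρ
    omega
  subst hs
  -- compute eVec of ρ
  have hρi : eVec C ρ i = q + 1 := by
    have h1 : aVec C ρ (Sum.inr i) = c (Sum.inr i) := by rw [hρeq]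
    rw [hcapp, Finsupp.single_eq_same, Finsupp.single_eq_of_ne' (by simp)] at h1
    simp only [aVec_inr, hσ'i] at h1
    omega
  have hρj : ∀ j, j ≠ i → eVec C ρ j = eVec C τ j := by
    intro j hji
    have h1 : aVec C ρ (Sum.inr j) = c (Sum.inr j) := by rw [hρeq]
    rw [hcapp, Finsupp.single_eq_of_ne' (by simp [Ne.symm hji]),
      Finsupp.single_eq_of_ne' (by simp)] at h1
    simp only [aVec_inr] at h1
    rw [h1, hej j hji]
    omega
  -- identify ρ with insert w τ
  have hext : insert w τ = ρ := by
    ext x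
    obtain ⟨jx, hxjx, _⟩ := hC.2.1 x
    obtain ⟨⟨mx, hmx⟩, hgetx⟩ := List.mem_iff_get.mp hxjx
    rcases eq_or_ne jx i with rfl | hji
    · have hxτ : x ∉ τ := hτi' x hxjx
      have hxρ : x ∈ ρ ↔ eVec C ρ jx = mx + 1 := mem_face_iff hC hρ hxjx hmx hgetx
      rw [hxρ, hρi]
      simp only [Finset.mem_insert]
      constructor
      · rintro (rfl | hxt)
        · have heq : (⟨q, hq'⟩ : Fin (C jx).length) = ⟨mx, hmx⟩ :=
            (hC.1 jx).get_inj_iff.mp hgetx.symm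
          have hqmx : q = mx := congrArg Fin.val heq
          omega
        · exact absurd hxt hxτ
      · intro h
        left
        have hqmx : mx = q := by omega
        subst hqmx
        rw [← hgetx, hwdef]
    · have hxw : x ≠ w := fun h => hji (class_eq hC hxjx (h ▸ hwC))
      have hxρ : x ∈ ρ ↔ eVec C ρ jx = mx + 1 := mem_face_iff hC hρ hxjx hmx hgetx
      have hxτiff : x ∈ τ ↔ eVec C τ jx = mx + 1 := mem_face_iff hC hτ hxjx hmx hgetx
      rw [hxρ, hρj jx hji, ← hxτiff]
      simp [Finset.mem_insert, hxw]
  show insert w τ ∈ Δ.faces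
  rw [hext]
  exact hρ

end Stmt10Aux

/-- Theorem 5.6: the uniform face ideal `I(Δ,𝒞)` is weakly polymatroidal
iff `𝒞` is a nested colouring endowed with the nesting order. -/
theorem stmt10 {n k : ℕ} (K : Type) [Field K] (Δ : SimpComplex (Fin n))
    (C : Fin k → List (Fin n)) (hC : IsOrderedColouring Δ C) :
    IsWeaklyPolymatroidal (uniformFaceIdeal K Δ C) ↔ IsNestingOrdered Δ C := by
  constructor
  · -- weakly polymatroidal → nesting ordered
    intro hWP i
    rw [List.pairwise_iff_getElem]
    intro p q hp hq hpq
    by_contra hnsub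
    obtain ⟨τ, hτl, hτnl⟩ := Set.not_subset.mp hnsub
    obtain ⟨hτf, huτ, hins⟩ := hτl
    have hvC : (C i).get ⟨p, hp⟩ ∈ C i := List.get_mem _ _
    have huC : (C i).get ⟨q, hq⟩ ∈ C i := List.get_mem _ _
    -- no element of the class `C i` lies in `τ`
    have hτi : eVec C τ i = 0 := by
      rw [eVec_eq_zero_iff]
      intro x hx hxτ
      have hxins : x ∈ insert ((C i).get ⟨q, hq⟩) τ := Finset.mem_insert_of_mem hxτ
      have hxq : x = (C i).get ⟨q, hq⟩ :=
        indep_eq hC hins hx huC hxins (Finset.mem_insert_self _ _)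
      refine huτ ?_
      rwa [hxq] at hxτ
    have hvτ : (C i).get ⟨p, hp⟩ ∉ τ := (eVec_eq_zero_iff C τ i).mp hτi _ hvC
    have hvins : insert ((C i).get ⟨p, hp⟩) τ ∉ Δ.faces := by
      intro hcontra
      exact hτnl ⟨hτf, hvτ, hcontra⟩
    -- descend from position `q` down to position `p`
    have desc : ∀ m : ℕ, ∀ r, ∀ hr : r < (C i).length, p ≤ r → r ≤ p + m →
        insert ((C i).get ⟨r, hr⟩) τ ∈ Δ.faces → False := by
      intro m
      induction m with
      | zero =>
        intro r hr h1 h2 hf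
        have hrp : r = p := by omega
        subst hrp
        exact hvins hf
      | succ m ih =>
        intro r hr h1 h2 hf
        rcases eq_or_lt_of_le h1 with rfl | hplt
        · exact hvins hf
        · obtain ⟨r', rfl⟩ : ∃ r', r = r' + 1 := ⟨r - 1, by omega⟩
          have hf' := wp_step hC hWP hτf hτi (q := r') hr hf
          exact ih r' (by omega) (by omega) (by omega) hf'
    exact desc (q - p) q hq (le_of_lt hpq) (by omega) hins
  · -- nesting ordered → weakly polymatroidal
    intro hnest a b ha hb t hpre hlt
    obtain ⟨σ, hσ, rfl⟩ := (isMinGen_iff K Δ C a).mp ha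
    obtain ⟨τ, hτ, rfl⟩ := (isMinGen_iff K Δ C b).mp hb
    have h2 := eVec_le C σ
    have h3 := eVec_le C τ
    cases t with
    | inr i =>
      exfalso
      have hik : (i : ℕ) < k := i.isLt
      have h1 : aVec C σ (Sum.inl i) = aVec C τ (Sum.inl i) := by
        refine hpre (Sum.inl i) ?_
        simp only [varIdx, Sum.elim_inl, Sum.elim_inr]
        omega
      simp only [aVec_inl] at h1
      simp only [aVec_inr] at hlt
      have := h2 i
      have := h3 i
      omega
    | inl i =>
      simp only [aVec_inl] at hlt
      have hpos : 1 ≤ eVec C τ i := by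
        have := h2 i
        have := h3 i
        omega
      obtain ⟨m, hm⟩ : ∃ m, eVec C τ i = m + 1 := ⟨eVec C τ i - 1, by omega⟩
      obtain ⟨ρ, hρ, hρi, hρj⟩ := exists_face_move hC hnest hτ i m hm
      refine ⟨Sum.inr i, ?_, ?_, ?_⟩
      · have hik : (i : ℕ) < k := i.isLt
        simp only [varIdx, Sum.elim_inl, Sum.elim_inr]
        omega
      · simp only [aVec_inr]
        omega
      · rw [← aVec_move hm hρi hρj]
        exact (monomial_mem_iff K Δ C _).mpr ⟨ρ, hρ, le_refl _⟩
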